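/- Let n ≥ 5 and k = 3. Let c assign an integer c_J to every nonfrozen 3-element subset J of {1,…,n}, and suppose that for every ℓ ∈ {1,…,n} and every 2-element subset {a,b} of {1,…,n}∖{ℓ} that is nonfrozen in {1,…,n}∖{ℓ}, one has Σ c_J ≥ 0, where the sum is over all nonfrozen 3-element subsets J of {1,…,n} with ∂_ℓ(J) = {a,b} (i.e. the element Σ_J c_J β_J lies in the cone 𝒴_{3,n} of weighted blade arrangements with nonnegative curvature on every facet). Then for all i, j ∈ {1,…,n}: if {i, i+1, j} is a nonfrozen 3-element subset (i+1 taken mod n) then c_{{i,i+1,j}} ≥ 0, and if {i, j, j+1} is a nonfrozen 3-element subset (j+1 taken mod n) then c_{{i,j,j+1}} ≥ 0. In other words, only the coefficients of totally nonfrozen vertices (those whose subset has three singleton cyclic intervals) can be negative. -/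

import Mathlib

open Finset

/-- Cyclic successor in `Fin n`. -/
def csucc {n : ℕ} (x : Fin n) : Fin n :=
  ⟨(x.val + 1) % n, Nat.mod_lt _ (Nat.lt_of_le_of_lt (Nat.zero_le _) x.isLt)⟩

/-- The cyclic interval `[i, j]` in `Fin n`. -/
def cInterval {n : ℕ} (i j : Fin n) : Finset (Fin n) :=
  univ.filter fun x => (x - i).val ≤ (j - i).val

/-- `K` is frozen in `S` if its elements are consecutive in the cyclic order induced
on `S` from `(1,2,…,n)`, i.e. `K` is the intersection of `S` with a cyclic interval. -/
def FrozenIn {n : ℕ} (S K : Finset (Fin n)) : Prop :=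
  ∃ i j : Fin n, K = S ∩ cInterval i j

instance {n : ℕ} (S K : Finset (Fin n)) : Decidable (FrozenIn S K) :=
  inferInstanceAs (Decidable (∃ i j : Fin n, K = S ∩ cInterval i j))

/-- The first element of `K` met when reading `j, j+1, j+2, …` cyclically
(`j` itself if `j ∈ K`); junk value `j` if `K = ∅`. -/
def nextIn {n : ℕ} (K : Finset (Fin n)) (j : Fin n) : Fin n :=
  if h : (univ.filter fun r : Fin n => j + r ∈ K).Nonempty then
    j + (univ.filter fun r : Fin n => j + r ∈ K).min' h
  else j

/-- `∂_ℓ(K) = K ∖ {m}`, where `m = ℓ` if `ℓ ∈ K` and otherwise `m` is the first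
element of `K` met when reading `ℓ+1, ℓ+2, …` cyclically. -/
def bdSet {n : ℕ} (ℓ : Fin n) (K : Finset (Fin n)) : Finset (Fin n) :=
  K.erase (nextIn K ℓ)

section Aux
variable {n : ℕ}
open Fin.NatCast

lemma my_val_one [NeZero n] (h : 2 ≤ n) : ((1 : Fin n)).val = 1 := by
  rw [← Nat.cast_one]; exact Fin.val_cast_of_lt h

lemma csucc_eq_add_one [NeZero n] (h : 2 ≤ n) (x : Fin n) : csucc x = x + 1 := by
  apply Fin.ext
  rw [Fin.add_def, my_val_one h]
  rfl

lemma card3_ne {α : Type*} [DecidableEq α] {a b c : α}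
    (h : ({a, b, c} : Finset α).card = 3) : a ≠ b ∧ a ≠ c ∧ b ≠ c := by
  have key : ∀ (x y : α), ({x, y} : Finset α).card ≤ 2 :=
    fun x y => (card_insert_le _ _).trans (by simp)
  refine ⟨fun e => ?_, fun e => ?_, fun e => ?_⟩
  · have h2 : ({a, b, c} : Finset α) = {b, c} := by rw [e]; ext z; simp
    rw [h2] at h; have := key b c; omega
  · have h2 : ({a, b, c} : Finset α) = {b, c} := by rw [e]; ext z; simp; try tauto
    rw [h2] at h; have := key b c; omega
  · have h2 : ({a, b, c} : Finset α) = {a, c} := by rw [e]; ext z; simp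
    rw [h2] at h; have := key a c; omega

lemma nextIn_filter_nonempty [NeZero n] {K : Finset (Fin n)} (hK : K.Nonempty) (j : Fin n) :
    (univ.filter fun r : Fin n => j + r ∈ K).Nonempty := by
  obtain ⟨k, hk⟩ := hK
  refine ⟨k - j, ?_⟩
  simp only [mem_filter, mem_univ, true_and]
  rwa [add_comm, sub_add_cancel]

lemma nextIn_mem [NeZero n] {K : Finset (Fin n)} (hK : K.Nonempty) (j : Fin n) :
    nextIn K j ∈ K := by
  rw [nextIn, dif_pos (nextIn_filter_nonempty hK j)]
  have := Finset.min'_mem _ (nextIn_filter_nonempty hK j)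
  simpa using this

lemma nextIn_self [NeZero n] {K : Finset (Fin n)} {j : Fin n} (h : j ∈ K) :
    nextIn K j = j := by
  have h0 : (0 : Fin n) ∈ univ.filter fun r : Fin n => j + r ∈ K := by simpa using h
  have hne : (univ.filter fun r : Fin n => j + r ∈ K).Nonempty := ⟨0, h0⟩
  rw [nextIn, dif_pos hne]
  have hle : (univ.filter fun r : Fin n => j + r ∈ K).min' hne ≤ 0 := min'_le _ _ h0
  have : (univ.filter fun r : Fin n => j + r ∈ K).min' hne = 0 :=
    le_antisymm hle (Fin.zero_le _)
  rw [this, add_zero]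

lemma nextIn_succ [NeZero n] (h2 : 2 ≤ n) {K : Finset (Fin n)} {j : Fin n}
    (hj : j ∉ K) (hj1 : j + 1 ∈ K) : nextIn K j = j + 1 := by
  have h1 : (1 : Fin n) ∈ univ.filter fun r : Fin n => j + r ∈ K := by simpa using hj1
  have hne : (univ.filter fun r : Fin n => j + r ∈ K).Nonempty := ⟨1, h1⟩
  rw [nextIn, dif_pos hne]
  set m := (univ.filter fun r : Fin n => j + r ∈ K).min' hne with hm
  have hmem : j + m ∈ K := by
    have := Finset.min'_mem _ hne
    simpa [← hm] using this
  have hle : m ≤ 1 := min'_le _ _ h1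
  have h0 : m ≠ 0 := by
    intro h; rw [h, add_zero] at hmem; exact hj hmem
  have : m = 1 := by
    apply Fin.ext
    have := Fin.le_def.mp hle
    rw [my_val_one h2] at this
    have hv0 : m.val ≠ 0 := fun hv => h0 (Fin.ext (by simpa using hv))
    rw [my_val_one h2]
    omega
  rw [this]

lemma bdSet_insert [NeZero n] {K : Finset (Fin n)} {ℓ : Fin n} (h : ℓ ∉ K) :
    bdSet ℓ (insert ℓ K) = K := by
  rw [bdSet, nextIn_self (mem_insert_self ℓ K), erase_insert h]

lemma bdSet_eq_unique [NeZero n] (h2 : 2 ≤ n) {J K : Finset (Fin n)} {ℓ : Fin n}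
    (hJ : J.Nonempty) (h1 : ℓ + 1 ∈ K) (hbd : bdSet ℓ J = K) : J = insert ℓ K := by
  by_cases hl : ℓ ∈ J
  · rw [bdSet, nextIn_self hl] at hbd
    rw [← hbd, insert_erase hl]
  · exfalso
    have hm : ℓ + 1 ∈ J := by
      have : ℓ + 1 ∈ bdSet ℓ J := hbd ▸ h1
      exact mem_of_mem_erase this
    have hnx : nextIn J ℓ = ℓ + 1 := nextIn_succ h2 hl hm
    rw [bdSet, hnx] at hbd
    exact (notMem_erase _ _) (hbd ▸ h1)

lemma mem_cInterval {a b x : Fin n} : x ∈ cInterval a b ↔ (x - a).val ≤ (b - a).val := by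
  simp [cInterval]

lemma cInterval_eq_image [NeZero n] (a b : Fin n) :
    cInterval a b = (Finset.range ((b - a).val + 1)).image (fun i : ℕ => a + (i : Fin n)) := by
  ext p
  simp only [mem_cInterval, mem_image, mem_range, Nat.lt_succ_iff]
  constructor
  · intro hp
    refine ⟨(p - a).val, hp, ?_⟩
    rw [Fin.cast_val_eq_self, add_comm, sub_add_cancel]
  · rintro ⟨i, hi, rfl⟩
    rw [add_sub_cancel_left, Fin.val_cast_of_lt (lt_of_le_of_lt hi (b - a).isLt)]
    exact hi

lemma cast_inj_of_lt [NeZero n] {i j : ℕ} (hi : i < n) (hj : j < n)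
    (h : (i : Fin n) = (j : Fin n)) : i = j := by
  have := congrArg Fin.val h
  rwa [Fin.val_cast_of_lt hi, Fin.val_cast_of_lt hj] at this

lemma frozen_lift [NeZero n] (hn : 5 ≤ n) {ℓ x : Fin n} (hx : x ≠ ℓ) (hxu : x ≠ ℓ + 1)
    (hF : FrozenIn (univ.erase ℓ) {ℓ + 1, x}) :
    FrozenIn univ ({ℓ, ℓ + 1, x} : Finset (Fin n)) := by
  have h2 : 2 ≤ n := by omega
  obtain ⟨a, b, hab⟩ := hF
  set d := (b - a).val with hd
  have hdlt : d < n := (b - a).isLt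
  have hu : ℓ + 1 ∈ cInterval a b := by
    have h' : ℓ + 1 ∈ ({ℓ + 1, x} : Finset (Fin n)) := by simp
    rw [hab] at h'; exact (mem_inter.mp h').2
  have hxI : x ∈ cInterval a b := by
    have h' : x ∈ ({ℓ + 1, x} : Finset (Fin n)) := by simp
    rw [hab] at h'; exact (mem_inter.mp h').2
  have hmem : ∀ p : Fin n, p ∈ cInterval a b → p = ℓ ∨ p = ℓ + 1 ∨ p = x := by
    intro p hp
    by_cases hpl : p = ℓ
    · exact Or.inl hpl
    · right
      have : p ∈ ({ℓ + 1, x} : Finset (Fin n)) := by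
        rw [hab]; exact mem_inter.mpr ⟨mem_erase.mpr ⟨hpl, mem_univ p⟩, hp⟩
      simpa using this
  have hpt : ∀ i : ℕ, i ≤ d → a + (i : Fin n) ∈ cInterval a b := by
    intro i hi
    rw [mem_cInterval, add_sub_cancel_left,
      Fin.val_cast_of_lt (lt_of_le_of_lt hi hdlt)]
    exact hi
  have hune : (ℓ + 1 : Fin n) ≠ x := Ne.symm hxu
  -- d ≥ 1
  have hd1 : 1 ≤ d := by
    by_contra h
    have h0 : d = 0 := by omega
    have e1 : ℓ + 1 - a = 0 := by
      apply Fin.ext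
      have := mem_cInterval.mp hu
      rw [← hd, h0] at this
      simpa using this
    have e2 : x - a = 0 := by
      apply Fin.ext
      have := mem_cInterval.mp hxI
      rw [← hd, h0] at this
      simpa using this
    exact hune (by rw [sub_eq_zero.mp e1, sub_eq_zero.mp e2])
  -- d ≤ 2
  have hd2 : d ≤ 2 := by
    by_contra h
    push_neg at h
    have hne4 : ∀ i j : ℕ, i < n → j < n → i ≠ j →
        a + (i : Fin n) ≠ a + (j : Fin n) := by
      intro i j hi hj hij he
      exact hij (cast_inj_of_lt hi hj (add_left_cancel he))
    have hsub : ({a + ((0:ℕ) : Fin n), a + ((1:ℕ) : Fin n), a + ((2:ℕ) : Fin n),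
        a + ((3:ℕ) : Fin n)} : Finset (Fin n)) ⊆ {ℓ, ℓ + 1, x} := by
      intro p hp
      simp only [mem_insert, mem_singleton] at hp
      have hpI : p ∈ cInterval a b := by
        rcases hp with rfl | rfl | rfl | rfl <;> exact hpt _ (by omega)
      rcases hmem p hpI with h' | h' | h' <;> simp [h']
    have hcard4 : ({a + ((0:ℕ) : Fin n), a + ((1:ℕ) : Fin n), a + ((2:ℕ) : Fin n),
        a + ((3:ℕ) : Fin n)} : Finset (Fin n)).card = 4 := by
      rw [card_insert_of_notMem (by
            simp only [mem_insert, mem_singleton]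
            push_neg
            exact ⟨hne4 0 1 (by omega) (by omega) (by omega),
                   hne4 0 2 (by omega) (by omega) (by omega),
                   hne4 0 3 (by omega) (by omega) (by omega)⟩),
          card_insert_of_notMem (by
            simp only [mem_insert, mem_singleton]
            push_neg
            exact ⟨hne4 1 2 (by omega) (by omega) (by omega),
                   hne4 1 3 (by omega) (by omega) (by omega)⟩),
          card_insert_of_notMem (by
            simp only [mem_singleton]
            exact hne4 2 3 (by omega) (by omega) (by omega)),
          card_singleton]
    have hcard3 : ({ℓ, ℓ + 1, x} : Finset (Fin n)).card ≤ 3 :=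
      (card_insert_le _ _).trans (Nat.succ_le_succ ((card_insert_le _ _).trans (by simp)))
    have := card_le_card hsub
    omega
  -- describe the interval explicitly
  have hIset : cInterval a b =
      (Finset.range (d + 1)).image (fun i : ℕ => a + (i : Fin n)) := by
    rw [cInterval_eq_image, ← hd]
  rcases (by omega : d = 1 ∨ d = 2) with h1 | h1
  · -- interval has two points {a, a+1}; so x = ℓ+1+1
    have hI2 : ∀ p : Fin n, p ∈ cInterval a b ↔ p = a ∨ p = a + ((1:ℕ) : Fin n) := by
      intro p
      rw [hIset, h1]
      have : Finset.range 2 = {0, 1} := by decide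
      rw [this]
      simp [eq_comm]
    have hux : (ℓ + 1 = a ∧ x = a + ((1:ℕ) : Fin n)) ∨
        (ℓ + 1 = a + ((1:ℕ) : Fin n) ∧ x = a) := by
      rcases (hI2 _).mp hu with h' | h' <;> rcases (hI2 _).mp hxI with h'' | h''
      · exact absurd (h'.trans h''.symm) hune
      · exact Or.inl ⟨h', h''⟩
      · exact Or.inr ⟨h', h''⟩
      · exact absurd (h'.trans h''.symm) hune
    rcases hux with ⟨ha, hxa⟩ | ⟨ha, hxa⟩
    · -- x = ℓ + 1 + 1
      have hxval : x = ℓ + 1 + 1 := by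
        rw [hxa, ← ha]; norm_num
      subst hxval
      refine ⟨ℓ, ℓ + 1 + 1, ?_⟩
      rw [univ_inter]
      ext p
      simp only [mem_insert, mem_singleton, mem_cInterval]
      have hsub2 : (ℓ + 1 + 1 - ℓ : Fin n) = ((2:ℕ) : Fin n) := by
        rw [add_assoc, add_sub_cancel_left]; norm_num
      rw [hsub2, Fin.val_cast_of_lt (by omega : (2:ℕ) < n)]
      constructor
      · rintro (rfl | rfl | rfl)
        · simp
        · rw [add_sub_cancel_left, my_val_one h2]; omega
        · rw [hsub2, Fin.val_cast_of_lt (by omega : (2:ℕ) < n)]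
      · intro hp
        have hp2 : (p - ℓ).val = 0 ∨ (p - ℓ).val = 1 ∨ (p - ℓ).val = 2 := by omega
        have key : ∀ k : ℕ, (p - ℓ).val = k → p = ℓ + (k : Fin n) := by
          intro k hk
          have : p - ℓ = (k : Fin n) := by
            rw [← hk, Fin.cast_val_eq_self]
          rw [sub_eq_iff_eq_add] at this
          rw [this, add_comm]
        rcases hp2 with hv | hv | hv
        · left; have := key 0 hv; simpa using this
        · right; left
          have := key 1 hv
          rw [this]; norm_num
        · right; right
          rw [key 2 hv, ← hsub2, add_comm ℓ (ℓ + 1 + 1 - ℓ), sub_add_cancel]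
    · -- x = a, ℓ + 1 = x + 1 → x = ℓ, contradiction
      exfalso
      apply hx
      have : ℓ + 1 = x + 1 := by rw [ha, hxa]; norm_num
      exact (add_right_cancel this).symm
  · -- d = 2: the interval is exactly {ℓ, ℓ+1, x}
    have hI3 : cInterval a b =
        ({a + ((0:ℕ) : Fin n), a + ((1:ℕ) : Fin n), a + ((2:ℕ) : Fin n)} : Finset (Fin n)) := by
      rw [hIset, h1]
      have : Finset.range 3 = {0, 1, 2} := by decide
      rw [this]
      ext p
      simp [eq_comm]
    have hsub : cInterval a b ⊆ ({ℓ, ℓ + 1, x} : Finset (Fin n)) := by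
      intro p hp
      rcases hmem p hp with h' | h' | h' <;> simp [h']
    have hcardI : (cInterval a b).card = 3 := by
      rw [hI3]
      have hne4 : ∀ i j : ℕ, i < n → j < n → i ≠ j →
          a + (i : Fin n) ≠ a + (j : Fin n) := by
        intro i j hi hj hij he
        exact hij (cast_inj_of_lt hi hj (add_left_cancel he))
      rw [card_insert_of_notMem (by
            simp only [mem_insert, mem_singleton]
            push_neg
            exact ⟨hne4 0 1 (by omega) (by omega) (by omega),
                   hne4 0 2 (by omega) (by omega) (by omega)⟩),
          card_insert_of_notMem (by
            simp only [mem_singleton]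
            exact hne4 1 2 (by omega) (by omega) (by omega)),
          card_singleton]
    have hcard3 : ({ℓ, ℓ + 1, x} : Finset (Fin n)).card ≤ 3 :=
      (card_insert_le _ _).trans (Nat.succ_le_succ ((card_insert_le _ _).trans (by simp)))
    have heq : cInterval a b = ({ℓ, ℓ + 1, x} : Finset (Fin n)) :=
      eq_of_subset_of_card_le hsub (by omega)
    exact ⟨a, b, by rw [univ_inter, heq]⟩

end Aux

/-- for `k = 3`, `n ≥ 5`, if the integer weights `c` on nonfrozen
3-subsets have nonnegative induced weights on every facet (i.e. for every `ℓ` and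
every nonfrozen pair `{a,b} ⊆ {1,…,n}∖{ℓ}`, `Σ_{∂_ℓ(J) = {a,b}} c_J ≥ 0`), then
`c_{{i,i+1,j}} ≥ 0` and `c_{{i,j,j+1}} ≥ 0` whenever these sets are nonfrozen
3-element subsets: only coefficients of totally nonfrozen vertices can be negative. -/
theorem stmt17 {n : ℕ} (hn : 5 ≤ n) (c : Finset (Fin n) → ℤ)
    (hbd : ∀ ℓ : Fin n, ∀ K : Finset (Fin n),
      K ⊆ univ.erase ℓ → K.card = 2 → ¬ FrozenIn (univ.erase ℓ) K →
      0 ≤ ∑ J ∈ (powersetCard 3 (univ : Finset (Fin n))).filter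
          (fun J => ¬ FrozenIn univ J ∧ bdSet ℓ J = K), c J) :
    ∀ i j : Fin n,
      (({i, csucc i, j} : Finset (Fin n)).card = 3 →
        ¬ FrozenIn univ ({i, csucc i, j} : Finset (Fin n)) →
        0 ≤ c {i, csucc i, j}) ∧
      (({i, j, csucc j} : Finset (Fin n)).card = 3 →
        ¬ FrozenIn univ ({i, j, csucc j} : Finset (Fin n)) →
        0 ≤ c {i, j, csucc j}) := by
  haveI : NeZero n := ⟨by omega⟩
  have h2 : 2 ≤ n := by omega
  intro i j
  constructor
  · intro h3 hnf
    rw [csucc_eq_add_one h2] at h3 hnf ⊢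
    obtain ⟨h1, hij, h1j⟩ := card3_ne h3
    have hsubK : ({i + 1, j} : Finset (Fin n)) ⊆ univ.erase i := by
      intro p hp
      simp only [mem_insert, mem_singleton] at hp
      rcases hp with rfl | rfl
      · exact mem_erase.mpr ⟨Ne.symm h1, mem_univ _⟩
      · exact mem_erase.mpr ⟨Ne.symm hij, mem_univ _⟩
    have hcardK : ({i + 1, j} : Finset (Fin n)).card = 2 := by
      rw [card_insert_of_notMem (by simpa using h1j), card_singleton]
    have hnfK : ¬ FrozenIn (univ.erase i) {i + 1, j} := fun hF =>
      hnf (frozen_lift hn (Ne.symm hij) (Ne.symm h1j) hF)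
    have key := hbd i {i + 1, j} hsubK hcardK hnfK
    have hfilt : (powersetCard 3 (univ : Finset (Fin n))).filter
        (fun J => ¬ FrozenIn univ J ∧ bdSet i J = {i + 1, j})
        = {({i, i + 1, j} : Finset (Fin n))} := by
      ext J
      simp only [mem_filter, mem_powersetCard, mem_singleton]
      constructor
      · rintro ⟨⟨-, hc⟩, -, hb⟩
        exact bdSet_eq_unique h2 (card_pos.mp (by omega)) (by simp) hb
      · rintro rfl
        refine ⟨⟨subset_univ _, h3⟩, hnf, ?_⟩
        exact bdSet_insert (by simp [h1, hij])
    rw [hfilt, sum_singleton] at key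
    exact key
  · intro h3 hnf
    rw [csucc_eq_add_one h2] at h3 hnf ⊢
    obtain ⟨hij, hij1, hjj1⟩ := card3_ne h3
    have hperm : ({j, j + 1, i} : Finset (Fin n)) = {i, j, j + 1} := by
      ext p; simp only [mem_insert, mem_singleton]; tauto
    have hsubK : ({j + 1, i} : Finset (Fin n)) ⊆ univ.erase j := by
      intro p hp
      simp only [mem_insert, mem_singleton] at hp
      rcases hp with rfl | rfl
      · exact mem_erase.mpr ⟨Ne.symm hjj1, mem_univ _⟩
      · exact mem_erase.mpr ⟨hij, mem_univ _⟩
    have hcardK : ({j + 1, i} : Finset (Fin n)).card = 2 := by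
      rw [card_insert_of_notMem (by simpa using Ne.symm hij1), card_singleton]
    have hnfK : ¬ FrozenIn (univ.erase j) {j + 1, i} := fun hF =>
      hnf (by rw [← hperm]; exact frozen_lift hn hij hij1 hF)
    have key := hbd j {j + 1, i} hsubK hcardK hnfK
    have hfilt : (powersetCard 3 (univ : Finset (Fin n))).filter
        (fun J => ¬ FrozenIn univ J ∧ bdSet j J = {j + 1, i})
        = {({j, j + 1, i} : Finset (Fin n))} := by
      ext J
      simp only [mem_filter, mem_powersetCard, mem_singleton]
      constructor
      · rintro ⟨⟨-, hc⟩, -, hb⟩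
        exact bdSet_eq_unique h2 (card_pos.mp (by omega)) (by simp) hb
      · rintro rfl
        refine ⟨⟨subset_univ _, by rw [hperm]; exact h3⟩, by rw [hperm]; exact hnf, ?_⟩
        exact bdSet_insert (by simp [hjj1, Ne.symm hij])
    rw [hfilt, sum_singleton] at key
    rwa [hperm] at key
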